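/- Let n ≥ 0 and 1 ≤ a < 2^(n+1). Let J = { j : 1 ≤ j ≤ 2^n, s₂(2^(n+1)+a−j) + s₂(j) = s₂(2^(n+1)+a) }. Then |J| = 2^{s₂(a)} − 1 if 1 ≤ a ≤ 2^n, and |J| = 2^{s₂(a)−1} if 2^n < a < 2^(n+1). -/

import Mathlib

/-- Stirling numbers of the second kind. -/
def S : ℕ → ℕ → ℕ
  | 0, 0 => 1
  | 0, _ + 1 => 0
  | _ + 1, 0 => 0
  | n + 1, k + 1 => S n k + (k + 1) * S n (k + 1)

/-- Sum of binary digits. -/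
def s₂ (n : ℕ) : ℕ := (Nat.digits 2 n).sum

lemma s2_zero : s₂ 0 = 0 := by simp [s₂]
lemma s2_one : s₂ 1 = 1 := by simp [s₂]

lemma s2_def (n : ℕ) : s₂ n = n % 2 + s₂ (n / 2) := by
  rcases n with _ | m
  · simp [s₂]
  · rw [s₂, Nat.digits_def' (by norm_num : 1 < 2) (Nat.succ_pos m)]
    simp [s₂]

lemma s2_two_mul (n : ℕ) : s₂ (2 * n) = s₂ n := by
  rw [s2_def (2*n)]; simp [Nat.mul_div_cancel_left, Nat.mul_mod_right]

lemma s2_two_mul_add_one (n : ℕ) : s₂ (2 * n + 1) = s₂ n + 1 := by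
  rw [s2_def (2*n+1)]
  have h1 : (2 * n + 1) % 2 = 1 := by omega
  have h2 : (2 * n + 1) / 2 = n := by omega
  rw [h1, h2]; ring

lemma land_decomp (j a : ℕ) : j &&& a = 2 * (j/2 &&& a/2) + (j % 2) * (a % 2) := by
  apply Nat.eq_of_testBit_eq
  intro i
  rcases i with _ | i
  · rw [Nat.testBit_land, Nat.testBit_zero, Nat.testBit_zero, Nat.testBit_zero]
    rcases Nat.mod_two_eq_zero_or_one j with h1 | h1 <;>
    rcases Nat.mod_two_eq_zero_or_one a with h2 | h2 <;> simp [h1, h2, Nat.mul_add_mod]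
  · rw [Nat.testBit_land, Nat.testBit_succ, Nat.testBit_succ, Nat.testBit_succ]
    have : (2 * (j / 2 &&& a / 2) + j % 2 * (a % 2)) / 2 = (j / 2 &&& a / 2) := by
      have : j % 2 * (a % 2) < 2 := by
        rcases Nat.mod_two_eq_zero_or_one j with h1 | h1 <;>
        rcases Nat.mod_two_eq_zero_or_one a with h2 | h2 <;> simp [h1, h2]
      omega
    rw [this, Nat.testBit_land]

lemma s2_add_le (m k : ℕ) : s₂ (m + k) ≤ s₂ m + s₂ k := by
  have H : ∀ s m k : ℕ, m + k ≤ s → s₂ (m + k) ≤ s₂ m + s₂ k := by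
    intro s
    induction s with
    | zero =>
      intro m k h
      obtain rfl : m = 0 := by omega
      obtain rfl : k = 0 := by omega
      simp
    | succ s ih =>
      intro m k h
      rcases Nat.eq_zero_or_pos m with rfl | hm; · simp [s2_zero]
      rcases Nat.eq_zero_or_pos k with rfl | hk; · simp [s2_zero]
      obtain ⟨m', bm, hbm, rfl⟩ : ∃ m' b, b < 2 ∧ m = 2 * m' + b := ⟨m/2, m%2, by omega, by omega⟩
      obtain ⟨k', bk, hbk, rfl⟩ : ∃ k' b, b < 2 ∧ k = 2 * k' + b := ⟨k/2, k%2, by omega, by omega⟩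
      interval_cases bm <;> interval_cases bk
      · rw [show 2*m'+0+(2*k'+0) = 2*(m'+k') by ring, s2_two_mul,
          show 2*m'+0 = 2*m' by ring, show 2*k'+0 = 2*k' by ring, s2_two_mul, s2_two_mul]
        exact ih m' k' (by omega)
      · rw [show 2*m'+0+(2*k'+1) = 2*(m'+k')+1 by ring, s2_two_mul_add_one,
          show 2*m'+0 = 2*m' by ring, s2_two_mul, s2_two_mul_add_one]
        have := ih m' k' (by omega); omega
      · rw [show 2*m'+1+(2*k'+0) = 2*(m'+k')+1 by ring, s2_two_mul_add_one,
          show 2*k'+0 = 2*k' by ring, s2_two_mul, s2_two_mul_add_one]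
        have := ih m' k' (by omega); omega
      · rw [show 2*m'+1+(2*k'+1) = 2*(m'+k'+1) by ring, s2_two_mul,
          s2_two_mul_add_one, s2_two_mul_add_one]
        have h2 := ih (m'+k') 1 (by omega)
        have h3 := ih m' k' (by omega)
        rw [s2_one] at h2; omega
  exact H (m+k) m k le_rfl

lemma s2_add_eq_iff (m k : ℕ) : s₂ (m + k) = s₂ m + s₂ k ↔ m &&& k = 0 := by
  have H : ∀ s m k : ℕ, m + k ≤ s → (s₂ (m + k) = s₂ m + s₂ k ↔ m &&& k = 0) := by
    intro s
    induction s with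
    | zero =>
      intro m k h
      obtain rfl : m = 0 := by omega
      obtain rfl : k = 0 := by omega
      simp [s2_zero]
    | succ s ih =>
      intro m k h
      rcases Nat.eq_zero_or_pos m with rfl | hm; · simp [s2_zero]
      rcases Nat.eq_zero_or_pos k with rfl | hk; · simp [s2_zero]
      obtain ⟨m', bm, hbm, rfl⟩ : ∃ m' b, b < 2 ∧ m = 2 * m' + b := ⟨m/2, m%2, by omega, by omega⟩
      obtain ⟨k', bk, hbk, rfl⟩ : ∃ k' b, b < 2 ∧ k = 2 * k' + b := ⟨k/2, k%2, by omega, by omega⟩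
      have hland : ∀ b1 b2, b1 < 2 → b2 < 2 →
          (2*m'+b1) &&& (2*k'+b2) = 2 * (m' &&& k') + b1 * b2 := by
        intro b1 b2 hb1 hb2
        rw [land_decomp, show (2*m'+b1)/2 = m' by omega, show (2*k'+b2)/2 = k' by omega,
          show (2*m'+b1)%2 = b1 by omega, show (2*k'+b2)%2 = b2 by omega]
      interval_cases bm <;> interval_cases bk <;> rw [hland _ _ (by omega) (by omega)]
      · rw [show 2*m'+0+(2*k'+0) = 2*(m'+k') by ring, s2_two_mul,
          show 2*m'+0 = 2*m' by ring, show 2*k'+0 = 2*k' by ring, s2_two_mul, s2_two_mul]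
        rw [ih m' k' (by omega)]; omega
      · rw [show 2*m'+0+(2*k'+1) = 2*(m'+k')+1 by ring, s2_two_mul_add_one,
          show 2*m'+0 = 2*m' by ring, s2_two_mul, s2_two_mul_add_one]
        rw [show (s₂ (m'+k') + 1 = s₂ m' + (s₂ k' + 1)) ↔ (s₂ (m'+k') = s₂ m' + s₂ k') by omega]
        rw [ih m' k' (by omega)]; omega
      · rw [show 2*m'+1+(2*k'+0) = 2*(m'+k')+1 by ring, s2_two_mul_add_one,
          show 2*k'+0 = 2*k' by ring, s2_two_mul, s2_two_mul_add_one]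
        rw [show (s₂ (m'+k') + 1 = s₂ m' + 1 + s₂ k') ↔ (s₂ (m'+k') = s₂ m' + s₂ k') by omega]
        rw [ih m' k' (by omega)]; omega
      · rw [show 2*m'+1+(2*k'+1) = 2*(m'+k'+1) by ring, s2_two_mul,
          s2_two_mul_add_one, s2_two_mul_add_one]
        have h2 := s2_add_le (m'+k') 1
        have h3 := s2_add_le m' k'
        rw [s2_one] at h2
        constructor <;> intro hc <;> omega
  exact H (m+k) m k le_rfl

lemma submask_sub (j x : ℕ) (h : j &&& x = j) : (x - j) &&& j = 0 := by
  have H : ∀ s x j : ℕ, x ≤ s → j &&& x = j → (x - j) &&& j = 0 := by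
    intro s
    induction s with
    | zero =>
      intro x j hx h
      obtain rfl : x = 0 := by omega
      have : j = 0 := by simpa using h.symm
      simp [this]
    | succ s ih =>
      intro x j hx h
      have hjx : j ≤ x := h ▸ Nat.and_le_right
      have hd := land_decomp j x
      rw [h] at hd
      have hle : j/2 &&& x/2 ≤ j/2 := Nat.and_le_left
      have h2 : j/2 &&& x/2 = j/2 ∧ j % 2 ≤ x % 2 := by
        rcases Nat.mod_two_eq_zero_or_one j with hj2 | hj2 <;>
          rcases Nat.mod_two_eq_zero_or_one x with hx2 | hx2 <;>
          simp [hj2, hx2] at hd ⊢ <;> omega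
      have hsub2 : (x - j) / 2 = x/2 - j/2 ∧ (x - j) % 2 = x % 2 - j % 2 := by
        have : j/2 ≤ x/2 := h2.1 ▸ Nat.and_le_right
        omega
      rw [land_decomp, hsub2.1, hsub2.2]
      have hih : (x/2 - j/2) &&& (j/2) = 0 := by
        rcases Nat.eq_zero_or_pos x with rfl | hx0
        · obtain rfl : j = 0 := by omega
          simp
        · exact ih (x/2) (j/2) (by omega) h2.1
      rw [hih]
      rcases Nat.mod_two_eq_zero_or_one j with hj2 | hj2
      · simp [hj2]
      · have : x % 2 = 1 := by omega
        simp [hj2, this]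
  exact H x x j le_rfl h

lemma land_add_self (m j : ℕ) (h : m &&& j = 0) : j &&& (m + j) = j := by
  have H : ∀ s m j : ℕ, m + j ≤ s → m &&& j = 0 → j &&& (m + j) = j := by
    intro s
    induction s with
    | zero =>
      intro m j hs h
      obtain rfl : m = 0 := by omega
      obtain rfl : j = 0 := by omega
      simp
    | succ s ih =>
      intro m j hs h
      rcases Nat.eq_zero_or_pos (m + j) with hmj | hmj
      · have hj0 : j = 0 := by omega
        subst hj0; simp
      have hd := land_decomp m j
      rw [h] at hd
      have h1 : m/2 &&& j/2 = 0 ∧ m % 2 * (j % 2) = 0 := by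
        constructor <;> omega
      have hsum : (m + j) / 2 = m/2 + j/2 ∧ (m + j) % 2 = m % 2 + j % 2 := by
        rcases Nat.mod_two_eq_zero_or_one m with hm2 | hm2 <;>
          rcases Nat.mod_two_eq_zero_or_one j with hj2 | hj2 <;> simp [hm2, hj2] at h1 ⊢ <;> omega
      rw [land_decomp j (m + j), hsum.1, hsum.2, ih (m/2) (j/2) (by omega) h1.1]
      rcases Nat.mod_two_eq_zero_or_one m with hm2 | hm2 <;>
        rcases Nat.mod_two_eq_zero_or_one j with hj2 | hj2 <;>
          simp [hm2, hj2] at h1 ⊢ <;> omega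
  exact H (m+j) m j le_rfl h

lemma s2_two_pow (n : ℕ) : s₂ (2 ^ n) = 1 := by
  induction n with
  | zero => simpa using s2_one
  | succ n ih => rw [pow_succ, mul_comm, s2_two_mul]; exact ih

lemma card_submask (n a : ℕ) (ha : a < 2 ^ n) :
    ((Finset.range (2 ^ n)).filter (fun j => j &&& a = j)).card = 2 ^ s₂ a := by
  induction n generalizing a with
  | zero =>
    obtain rfl : a = 0 := by simpa using ha
    simp [Finset.filter_singleton, s2_zero, Finset.range_one]
  | succ n ih =>
    have h2n : (0:ℕ) < 2 ^ n := Nat.pow_pos (by norm_num)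
    have ha2 : a / 2 < 2 ^ n := by
      rw [pow_succ] at ha; omega
    rcases Nat.mod_two_eq_zero_or_one a with hpar | hpar
    · have hset : (Finset.range (2 ^ (n+1))).filter (fun j => j &&& a = j) =
          ((Finset.range (2 ^ n)).filter (fun j => j &&& (a/2) = j)).image (fun j => 2 * j) := by
        ext j
        simp only [Finset.mem_filter, Finset.mem_range, Finset.mem_image]
        constructor
        · rintro ⟨h1, h2⟩
          have hd := land_decomp j a
          rw [h2, hpar] at hd
          have hle : j/2 &&& a/2 ≤ j/2 := Nat.and_le_left
          have hj2 : j % 2 = 0 ∧ j/2 &&& a/2 = j/2 := by omega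
          exact ⟨j/2, ⟨by rw [pow_succ] at h1; omega, hj2.2⟩, by omega⟩
        · rintro ⟨j', ⟨hj1, hj2⟩, rfl⟩
          refine ⟨by rw [pow_succ]; omega, ?_⟩
          rw [land_decomp, show 2*j'/2 = j' by omega, show 2*j' % 2 = 0 by omega, hpar, hj2]
          ring
      rw [hset, Finset.card_image_of_injective _ (fun x y hxy => by omega), ih _ ha2,
        s2_def a, hpar]
      norm_num
    · have hset : (Finset.range (2 ^ (n+1))).filter (fun j => j &&& a = j) =
          ((Finset.range (2 ^ n)).filter (fun j => j &&& (a/2) = j)).image (fun j => 2 * j) ∪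
          ((Finset.range (2 ^ n)).filter (fun j => j &&& (a/2) = j)).image (fun j => 2 * j + 1) := by
        ext j
        simp only [Finset.mem_filter, Finset.mem_range, Finset.mem_image, Finset.mem_union]
        constructor
        · rintro ⟨h1, h2⟩
          have hd := land_decomp j a
          rw [h2, hpar] at hd
          have hle : j/2 &&& a/2 ≤ j/2 := Nat.and_le_left
          have hj2 : j/2 &&& a/2 = j/2 := by omega
          have hjr : j / 2 < 2 ^ n := by rw [pow_succ] at h1; omega
          rcases Nat.mod_two_eq_zero_or_one j with hp | hp
          · exact Or.inl ⟨j/2, ⟨hjr, hj2⟩, by omega⟩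
          · exact Or.inr ⟨j/2, ⟨hjr, hj2⟩, by omega⟩
        · rintro (⟨j', ⟨hj1, hj2⟩, rfl⟩ | ⟨j', ⟨hj1, hj2⟩, rfl⟩)
          · refine ⟨by rw [pow_succ]; omega, ?_⟩
            rw [land_decomp, show 2*j'/2 = j' by omega, show 2*j' % 2 = 0 by omega, hj2]
            ring
          · refine ⟨by rw [pow_succ]; omega, ?_⟩
            rw [land_decomp, show (2*j'+1)/2 = j' by omega, show (2*j'+1) % 2 = 1 by omega,
              hpar, hj2]
            try ring
      have hdisj : Disjoint
          (((Finset.range (2 ^ n)).filter (fun j => j &&& (a/2) = j)).image (fun j => 2 * j))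
          (((Finset.range (2 ^ n)).filter (fun j => j &&& (a/2) = j)).image (fun j => 2 * j + 1)) := by
        rw [Finset.disjoint_left]
        rintro x hx hy
        simp only [Finset.mem_image] at hx hy
        obtain ⟨u, _, hu⟩ := hx
        obtain ⟨v, _, hv⟩ := hy
        omega
      rw [hset, Finset.card_union_of_disjoint hdisj,
        Finset.card_image_of_injective _ (fun x y hxy => by omega),
        Finset.card_image_of_injective _ (fun x y hxy => by omega), ih _ ha2,
        s2_def a, hpar, pow_add, pow_one]
      ring

lemma land_two_pow_add (N j a : ℕ) (hj : j < 2 ^ N) :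
    j &&& (2 ^ N + a) = j &&& a := by
  apply Nat.eq_of_testBit_eq
  intro i
  rw [Nat.testBit_land, Nat.testBit_land]
  rcases lt_or_ge i N with hi | hi
  · rw [Nat.testBit_two_pow_add_gt hi]
  · have hlt : j < 2 ^ i := lt_of_lt_of_le hj (Nat.pow_le_pow_right (by norm_num) hi)
    rw [Nat.testBit_lt_two_pow hlt]
    simp


theorem stmt6 (n a : ℕ) (ha0 : 1 ≤ a) (ha : a < 2 ^ (n + 1)) :
    ((Finset.Icc 1 (2 ^ n)).filter
        (fun j => s₂ (2 ^ (n + 1) + a - j) + s₂ j = s₂ (2 ^ (n + 1) + a))).card =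
      if a ≤ 2 ^ n then 2 ^ s₂ a - 1 else 2 ^ (s₂ a - 1) := by
  have h2n : (0:ℕ) < 2 ^ n := Nat.pow_pos (by norm_num)
  have h2n1 : (2:ℕ) ^ (n+1) = 2 * 2 ^ n := by rw [pow_succ]; ring
  have hkey : ∀ j ∈ Finset.Icc 1 (2 ^ n),
      (s₂ (2 ^ (n + 1) + a - j) + s₂ j = s₂ (2 ^ (n + 1) + a)) ↔ (j &&& a = j) := by
    intro j hj
    simp only [Finset.mem_Icc] at hj
    have hjlt : j < 2 ^ (n+1) := by omega
    have hjx : j ≤ 2 ^ (n+1) + a := by omega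
    have e1 : 2 ^ (n+1) + a = (2 ^ (n+1) + a - j) + j := by omega
    constructor
    · intro h
      have h0 : (2 ^ (n+1) + a - j) &&& j = 0 :=
        (s2_add_eq_iff _ j).mp (by rw [← e1]; omega)
      have h1 := land_add_self _ j h0
      rw [← e1] at h1
      rwa [land_two_pow_add _ _ _ hjlt] at h1
    · intro h
      have h1 : j &&& (2 ^ (n+1) + a) = j := by
        rw [land_two_pow_add _ _ _ hjlt]; exact h
      have h0 := submask_sub j _ h1
      have h2 := (s2_add_eq_iff (2 ^ (n+1) + a - j) j).mpr h0
      rw [← e1] at h2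
      omega
  rw [Finset.filter_congr hkey]
  by_cases hcase : a ≤ 2 ^ n
  · rw [if_pos hcase]
    have hss : (Finset.Icc 1 (2 ^ n)).filter (fun j => j &&& a = j)
        = ((Finset.range (2 ^ (n+1))).filter (fun j => j &&& a = j)).erase 0 := by
      ext j
      simp only [Finset.mem_filter, Finset.mem_Icc, Finset.mem_erase, Finset.mem_range]
      constructor
      · rintro ⟨⟨h1, h2⟩, h3⟩
        exact ⟨by omega, by omega, h3⟩
      · rintro ⟨h0, h1, h2⟩
        have hja : j ≤ a := h2 ▸ Nat.and_le_right
        exact ⟨⟨by omega, by omega⟩, h2⟩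
    rw [hss, Finset.card_erase_of_mem (by simp [Finset.mem_filter]),
      card_submask _ _ ha]
  · rw [if_neg hcase]
    set b := a - 2 ^ n with hbdef
    have hb : b < 2 ^ n := by omega
    have hab : a = 2 ^ n + b := by omega
    have htb : Nat.testBit b n = false := Nat.testBit_lt_two_pow hb
    have hta : Nat.testBit a n = true := by
      rw [hab, Nat.testBit_two_pow_add_eq, htb]; rfl
    have hland_b : ∀ j, j < 2 ^ n → (j &&& a = j ↔ j &&& b = j) := by
      intro j hj
      rw [hab, land_two_pow_add n j b hj]
    have hss : (Finset.Icc 1 (2 ^ n)).filter (fun j => j &&& a = j)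
        = insert (2 ^ n) (((Finset.range (2 ^ n)).filter (fun j => j &&& b = j)).erase 0) := by
      ext j
      simp only [Finset.mem_insert, Finset.mem_filter, Finset.mem_Icc, Finset.mem_erase,
        Finset.mem_range]
      constructor
      · rintro ⟨⟨h1, h2⟩, h3⟩
        rcases eq_or_lt_of_le h2 with heq | hlt
        · exact Or.inl heq
        · exact Or.inr ⟨by omega, hlt, (hland_b j hlt).mp h3⟩
      · rintro (rfl | ⟨h0, h1, h2⟩)
        · refine ⟨⟨by omega, le_refl _⟩, ?_⟩
          rw [Nat.two_pow_and, hta]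
          simp
        · exact ⟨⟨by omega, by omega⟩, (hland_b j h1).mpr h2⟩
    have hsa : s₂ a = s₂ b + 1 := by
      rw [hab, add_comm (2 ^ n) b]
      have hz : b &&& 2 ^ n = 0 := by rw [Nat.and_two_pow, htb]; simp
      rw [(s2_add_eq_iff b (2 ^ n)).mpr hz, s2_two_pow]
    rw [hss, Finset.card_insert_of_notMem (by simp), 
      Finset.card_erase_of_mem (by simp [Finset.mem_filter]),
      card_submask _ _ hb, hsa, Nat.add_sub_cancel]
    have hpos : (1:ℕ) ≤ 2 ^ s₂ b := Nat.one_le_two_pow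
    omega
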